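/- arXiv:1109.2409 — 3 statements merged into one kernel-verified Lean document; each statement's English description precedes it below -/
import Mathlib

section
/- Fix $\tau \in S_{2n}$ and a positive integer $N$. Let $A(\tau,N)$ be the set of pairs $(\mathbf{k},\mathbf{l}) \in [N]^n \times [N]^n$ such that $\tilde{\mathbf{l}} = (\tilde{\mathbf{k}})^\tau$, where $\tilde{\mathbf{k}} = (k_1,k_1,k_2,k_2,\dots,k_n,k_n)$, $\tilde{\mathbf{l}} = (l_1,l_1,\dots,l_n,l_n)$, and $\mathbf{i}^\tau$ denotes $(i_{\tau(1)},\dots,i_{\tau(2n)})$. Then $|A(\tau,N)| = N^{\ell'(\tau)}$, where $\ell'(\tau)$ is the number of connected components of the graph $\Gamma(\tau)$. -/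
open scoped Classical

noncomputable section

/-- The vertex `2k-1` (0-indexed: `2k`). -/
def lo (n : ℕ) (k : Fin n) : Fin (2*n) := ⟨2*k.1, by have := k.2; omega⟩
/-- The vertex `2k` (0-indexed: `2k+1`). -/
def hi (n : ℕ) (k : Fin n) : Fin (2*n) := ⟨2*k.1+1, by have := k.2; omega⟩

/-- The hyperoctahedral group `H_n ⊆ S_{2n}`, generated by the transpositions
`(2k-1, 2k)` and the double transpositions `(2i-1, 2j-1)(2i, 2j)` for `i < j`. -/
def hyperoctahedral (n : ℕ) : Subgroup (Equiv.Perm (Fin (2*n))) :=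
  Subgroup.closure
    ({g | ∃ k : Fin n, g = Equiv.swap (lo n k) (hi n k)} ∪
     {g | ∃ i j : Fin n, i < j ∧
        g = Equiv.swap (lo n i) (lo n j) * Equiv.swap (hi n i) (hi n j)})

/-- The graph `Γ(σ)` on vertices `1, …, 2n` with edges `{2k-1, 2k}` and
`{σ(2k-1), σ(2k)}` for `k = 1, …, n`. -/
def pairGraph (n : ℕ) (σ : Equiv.Perm (Fin (2*n))) : SimpleGraph (Fin (2*n)) :=
  SimpleGraph.fromRel (fun x y => ∃ k : Fin n,
    (x = lo n k ∧ y = hi n k) ∨ (x = σ (lo n k) ∧ y = σ (hi n k)))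

/-- `ℓ′(σ)`, the number of connected components of `Γ(σ)`. -/
def compCount (n : ℕ) (σ : Equiv.Perm (Fin (2*n))) : ℕ :=
  Nat.card (pairGraph n σ).ConnectedComponent

/-- The coset-type of `σ ∈ S_{2n}`: the multiset of half the sizes of the
connected components of `Γ(σ)`; it is a partition of `n`. -/
def cosetType (n : ℕ) (σ : Equiv.Perm (Fin (2*n))) : Multiset ℕ :=
  haveI : Fintype (pairGraph n σ).ConnectedComponent := Fintype.ofFinite _
  (Finset.univ : Finset (pairGraph n σ).ConnectedComponent).val.map
    (fun c => c.supp.ncard / 2)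

/-- `k̃ = (k_1, k_1, k_2, k_2, …, k_n, k_n)`. -/
def tilde (N n : ℕ) (k : Fin n → Fin N) : Fin (2*n) → Fin N :=
  fun x => k ⟨x.1 / 2, by have := x.2; omega⟩


/-- `x/2` as an element of `Fin n`. -/
def half {n : ℕ} (x : Fin (2*n)) : Fin n := ⟨x.1 / 2, by have := x.2; omega⟩

lemma tilde_half (N n : ℕ) (k : Fin n → Fin N) (x : Fin (2*n)) :
    tilde N n k x = k (half x) := rfl

lemma half_lo (n : ℕ) (j : Fin n) : half (lo n j) = j := by
  apply Fin.ext; show 2 * j.1 / 2 = j.1; omega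

lemma half_hi (n : ℕ) (j : Fin n) : half (hi n j) = j := by
  apply Fin.ext; show (2 * j.1 + 1) / 2 = j.1; omega

lemma lo_or_hi {n : ℕ} (x : Fin (2*n)) : x = lo n (half x) ∨ x = hi n (half x) := by
  rcases Nat.even_or_odd x.1 with ⟨m, hm⟩ | ⟨m, hm⟩
  · left; apply Fin.ext; show x.1 = 2 * (x.1/2); omega
  · right; apply Fin.ext; show x.1 = 2 * (x.1/2) + 1; omega

lemma adj_pair (n : ℕ) (τ : Equiv.Perm (Fin (2*n))) (j : Fin n) :
    (pairGraph n τ).Adj (lo n j) (hi n j) := by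
  refine (SimpleGraph.fromRel_adj _ _ _).2 ⟨?_, Or.inl ⟨j, Or.inl ⟨rfl, rfl⟩⟩⟩
  intro h; have := congrArg Fin.val h; simp [lo, hi] at this

lemma adj_tau (n : ℕ) (τ : Equiv.Perm (Fin (2*n))) (j : Fin n) :
    (pairGraph n τ).Adj (τ (lo n j)) (τ (hi n j)) := by
  refine (SimpleGraph.fromRel_adj _ _ _).2 ⟨?_, Or.inl ⟨j, Or.inr ⟨rfl, rfl⟩⟩⟩
  intro h
  have := τ.injective h
  have := congrArg Fin.val this; simp [lo, hi] at this

lemma reach_half {n : ℕ} (τ : Equiv.Perm (Fin (2*n))) (x : Fin (2*n)) :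
    (pairGraph n τ).Reachable x (lo n (half x)) := by
  rcases lo_or_hi x with h | h
  · rw [← h]
  · rw [h, half_hi]; exact (adj_pair n τ (half x)).symm.reachable

lemma reach_tau_half {n : ℕ} (τ : Equiv.Perm (Fin (2*n))) (x : Fin (2*n)) :
    (pairGraph n τ).Reachable (τ (lo n (half x))) (τ x) := by
  rcases lo_or_hi x with h | h
  · rw [← h]
  · conv_rhs => rw [h]
    exact (adj_tau n τ (half x)).reachable

lemma const_of_adj {n N : ℕ} {G : SimpleGraph (Fin (2*n))} {f : Fin (2*n) → Fin N}
    (h : ∀ x y, G.Adj x y → f x = f y) :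
    ∀ x y, G.Reachable x y → f x = f y := by
  intro x y hxy
  obtain ⟨p⟩ := hxy
  induction p with
  | nil => rfl
  | cons ha _ ih => exact (h _ _ ha).trans ih

/-- `|A(τ, N)| = N^{ℓ′(τ)}`. -/
theorem stmt4 (n N : ℕ) (hN : 0 < N) (τ : Equiv.Perm (Fin (2*n))) :
    Nat.card {p : (Fin n → Fin N) × (Fin n → Fin N) //
        tilde N n p.2 = fun x => tilde N n p.1 (τ x)} = N ^ compCount n τ := by
  set G := pairGraph n τ with hGdef
  have hconst : ∀ (p : {p : (Fin n → Fin N) × (Fin n → Fin N) //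
      tilde N n p.2 = fun x => tilde N n p.1 (τ x)}),
      ∀ x y, G.Reachable x y → tilde N n p.1.1 x = tilde N n p.1.1 y := by
    intro p
    apply const_of_adj
    intro x y hxy
    rw [hGdef] at hxy
    rw [pairGraph, SimpleGraph.fromRel_adj] at hxy
    obtain ⟨-, h | h⟩ := hxy
    · obtain ⟨j, ⟨hx, hy⟩ | ⟨hx, hy⟩⟩ := h
      · subst hx; subst hy; rw [tilde_half, tilde_half, half_lo, half_hi]
      · subst hx; subst hy
        have h1 := congrFun p.2 (lo n j)
        have h2 := congrFun p.2 (hi n j)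
        rw [← h1, ← h2, tilde_half, tilde_half, half_lo, half_hi]
    · obtain ⟨j, ⟨hx, hy⟩ | ⟨hx, hy⟩⟩ := h
      · subst hx; subst hy; rw [tilde_half, tilde_half, half_lo, half_hi]
      · subst hx; subst hy
        have h1 := congrFun p.2 (lo n j)
        have h2 := congrFun p.2 (hi n j)
        rw [← h1, ← h2, tilde_half, tilde_half, half_lo, half_hi]
  have key : Nat.card {p : (Fin n → Fin N) × (Fin n → Fin N) //
      tilde N n p.2 = fun x => tilde N n p.1 (τ x)}
      = Nat.card (G.ConnectedComponent → Fin N) := by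
    apply Nat.card_congr
    refine
      { toFun := fun p => Quot.lift (tilde N n p.1.1) (hconst p)
        invFun := fun F =>
          ⟨(fun j => F (G.connectedComponentMk (lo n j)),
            fun j => F (G.connectedComponentMk (τ (lo n j)))), ?_⟩
        left_inv := ?_
        right_inv := ?_ }
    · funext x
      simp only [tilde_half]
      rw [SimpleGraph.ConnectedComponent.sound (reach_tau_half τ x),
        SimpleGraph.ConnectedComponent.sound (reach_half τ (τ x))]
    · rintro ⟨⟨k, l⟩, hp⟩
      apply Subtype.ext
      apply Prod.ext
      · funext j
        show tilde N n k (lo n j) = k j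
        rw [tilde_half, half_lo]
      · funext j
        show tilde N n k (τ (lo n j)) = l j
        have h1 := congrFun hp (lo n j)
        simp only at h1
        rw [← h1, tilde_half, half_lo]
    · intro F
      funext c
      induction c using SimpleGraph.ConnectedComponent.ind with
      | _ x =>
        show tilde N n (fun j => F (G.connectedComponentMk (lo n j))) x
          = F (G.connectedComponentMk x)
        rw [tilde_half]
        exact congrArg F (SimpleGraph.ConnectedComponent.sound (reach_half τ x)).symm
  rw [key, Nat.card_fun, Nat.card_eq_fintype_card (α := Fin N), Fintype.card_fin]
  rfl
end
end

section
/- For any $n \ge 1$ and any complex number $z$ not in $\{0,-2,-4,\dots,-2(n-1)\}$, the sum of the orthogonal Weingarten function over all of $S_{2n}$ equals $\sum_{\sigma \in S_{2n}} \mathrm{Wg}^O_n(\sigma;z) = \frac{2^n n!}{z(z+2)(z+4)\cdots(z+2(n-1))}$. -/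
open scoped Classical

noncomputable section

/-- The value at `π` of the permutation character of `S_n` acting on ordered set
partitions of `[n]` with block sizes `c = (c_1, …, c_l)` (the character induced from
the trivial character of the Young subgroup `S_c`); `0` if `c` is not a composition
of `n` into nonnegative parts. -/
def youngChar (n l : ℕ) (c : Fin l → ℤ) (π : Equiv.Perm (Fin n)) : ℤ :=
  ((Finset.univ.filter (fun f : Fin n → Fin l =>
     (∀ i, ((Finset.univ.filter fun x => f x = i).card : ℤ) = c i) ∧
     ∀ x, f (π x) = f x)).card : ℤ)

/-- The parts of the partition `μ` listed in weakly decreasing order. -/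
def sortedParts {n : ℕ} (μ : Nat.Partition n) : List ℕ :=
  (Multiset.sort μ.parts (· ≤ ·)).reverse

/-- The irreducible character `χ^μ` of `S_n` associated with the partition `μ ⊢ n`,
via the determinantal (Jacobi–Trudi) formula
`χ^μ = det(η^{μ_i - i + j})_{1 ≤ i,j ≤ ℓ(μ)}` in terms of the permutation characters
`η^c = youngChar`. -/
def charOfPartition {n : ℕ} (μ : Nat.Partition n) (π : Equiv.Perm (Fin n)) : ℤ :=
  ∑ w : Equiv.Perm (Fin (sortedParts μ).length),
    (Equiv.Perm.sign w : ℤ) *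
      youngChar n (sortedParts μ).length
        (fun i => ((sortedParts μ).get i : ℤ) + ((w i).1 : ℤ) - (i.1 : ℤ)) π

/-- The partition `2μ = (2μ_1, 2μ_2, …)` of `2n`. -/
def doublePartition {n : ℕ} (μ : Nat.Partition n) : Nat.Partition (2*n) where
  parts := μ.parts.map (fun r => 2*r)
  parts_pos := by
    intro i hi
    rcases Multiset.mem_map.mp hi with ⟨r, hr, rfl⟩
    have := μ.parts_pos hr; omega
  parts_sum := by
    have h : (μ.parts.map (fun r => 2*r)).sum = 2 * μ.parts.sum := by
      simpa using (Multiset.sum_map_mul_left (a := 2) (f := id) (s := μ.parts))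
    rw [h, μ.parts_sum]

/-- Convolution of two functions on a symmetric group:
`(f₁ * f₂)(σ) = ∑_τ f₁(στ⁻¹) f₂(τ)`. -/
def conv {n : ℕ} (f g : Equiv.Perm (Fin n) → ℂ) : Equiv.Perm (Fin n) → ℂ :=
  fun σ => ∑ τ : Equiv.Perm (Fin n), f (σ * τ⁻¹) * g τ

/-- `e_{H_n}`: the normalized indicator function of the hyperoctahedral group. -/
def eH (n : ℕ) : Equiv.Perm (Fin (2*n)) → ℂ :=
  fun σ => if σ ∈ hyperoctahedral n then ((2^n * n.factorial : ℂ))⁻¹ else 0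

/-- The zonal spherical function `ω^λ = χ^{2λ} * e_{H_n}` of the Gelfand pair
`(S_{2n}, H_n)`. -/
def omegaSph {n : ℕ} (lam : Nat.Partition n) : Equiv.Perm (Fin (2*n)) → ℂ :=
  conv (fun σ => (charOfPartition (doublePartition lam) σ : ℂ)) (eH n)

/-- `C′_λ(z) = ∏_{(i,j) ∈ λ} (z + 2j - i - 1)` (with `1`-based coordinates). -/
def Cprime {n : ℕ} (lam : Nat.Partition n) (z : ℂ) : ℂ :=
  ∏ i ∈ Finset.range (sortedParts lam).length,
    ∏ j ∈ Finset.range ((sortedParts lam).getD i 0), (z + 2*(j:ℂ) - (i:ℂ))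

/-- The orthogonal Weingarten function
`Wg^O_n(σ; z) = (2^n n!/(2n)!) ∑_{λ ⊢ n} (f^{2λ}/C′_λ(z)) ω^λ(σ)`. -/
def WgO (n : ℕ) (z : ℂ) (σ : Equiv.Perm (Fin (2*n))) : ℂ :=
  (2^n * n.factorial : ℂ) / ((2*n).factorial : ℂ) *
    ∑ lam : Nat.Partition n,
      (charOfPartition (doublePartition lam) 1 : ℂ) / Cprime lam z * omegaSph lam σ


/-! ### Auxiliary lemmas on `youngChar` and `charOfPartition` -/

lemma Equiv.Perm.apply_inv_self {α : Type*} (σ : Equiv.Perm α) (x : α) : σ (σ⁻¹ x) = x :=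
  Equiv.apply_symm_apply σ x

lemma Equiv.Perm.inv_apply_self {α : Type*} (σ : Equiv.Perm α) (x : α) : σ⁻¹ (σ x) = x :=
  Equiv.symm_apply_apply σ x

lemma exists_comp_eq {m l : ℕ} (f g : Fin m → Fin l)
    (h : ∀ i, (Finset.univ.filter fun x => f x = i).card
            = (Finset.univ.filter fun x => g x = i).card) :
    ∃ τ : Equiv.Perm (Fin m), f ∘ τ = g := by
  have h' : ∀ i, Fintype.card {x // g x = i} = Fintype.card {x // f x = i} := by
    intro i
    rw [Fintype.card_subtype, Fintype.card_subtype]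
    exact (h i).symm
  have e : ∀ i, {x // g x = i} ≃ {x // f x = i} := fun i => Fintype.equivOfCardEq (h' i)
  refine ⟨(Equiv.sigmaFiberEquiv g).symm.trans
    ((Equiv.sigmaCongrRight e).trans (Equiv.sigmaFiberEquiv f)), funext fun x => ?_⟩
  simp only [Function.comp_apply, Equiv.coe_fn_mk, Equiv.trans_apply]
  have h1 : (Equiv.sigmaFiberEquiv g).symm x = ⟨g x, ⟨x, rfl⟩⟩ := rfl
  rw [h1]
  have h2 : (Equiv.sigmaCongrRight e) ⟨g x, ⟨x, rfl⟩⟩ = ⟨g x, e (g x) ⟨x, rfl⟩⟩ := rfl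
  rw [h2]
  exact (e (g x) ⟨x, rfl⟩).2

def sigmaFstFiber {l : ℕ} (β : Fin l → Type*) (i : Fin l) :
    {p : (Σ j, β j) // p.1 = i} ≃ β i where
  toFun p := p.2 ▸ p.1.2
  invFun y := ⟨⟨i, y⟩, rfl⟩
  left_inv := by rintro ⟨⟨j, y⟩, rfl⟩; rfl
  right_inv := by intro y; rfl

lemma count_comp_perm {m l : ℕ} (f : Fin m → Fin l) (τ : Equiv.Perm (Fin m)) (i : Fin l) :
    (Finset.univ.filter fun x => f (τ x) = i).card
      = (Finset.univ.filter fun x => f x = i).card := by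
  apply Finset.card_bij' (fun x _ => τ x) (fun x _ => τ.symm x) <;>
    simp [Finset.mem_filter]

lemma sum_youngChar_nat (m l : ℕ) (d : Fin l → ℕ) (hsum : ∑ i, d i = m) :
    ∑ σ : Equiv.Perm (Fin m),
      ((Finset.univ.filter (fun f : Fin m → Fin l =>
        (∀ i, (Finset.univ.filter fun x => f x = i).card = d i) ∧
        ∀ x, f (σ x) = f x)).card) = m.factorial := by
  classical
  have hcard : Fintype.card (Σ i : Fin l, Fin (d i)) = m := by
    simp [hsum]
  let e := Fintype.equivFinOfCardEq hcard
  set f₀ : Fin m → Fin l := fun x => (e.symm x).1 with hf₀def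
  have hf₀ : ∀ i, (Finset.univ.filter fun x => f₀ x = i).card = d i := by
    intro i
    rw [← Fintype.card_subtype]
    rw [Fintype.card_congr ((Equiv.subtypeEquiv e.symm (fun x => Iff.rfl)).trans
      (sigmaFstFiber (fun j => Fin (d j)) i))]
    simp
  -- std
  have hstd : ∀ f : Fin m → Fin l, ∃ τ : Equiv.Perm (Fin m),
      (∀ i, (Finset.univ.filter fun x => f x = i).card = d i) → f ∘ τ = f₀ := by
    intro f
    by_cases h : ∀ i, (Finset.univ.filter fun x => f x = i).card = d i
    · obtain ⟨τ, hτ⟩ := exists_comp_eq f f₀ (fun i => by rw [h i, hf₀ i])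
      exact ⟨τ, fun _ => hτ⟩
    · exact ⟨1, fun h' => absurd h' h⟩
  choose std hstd using hstd
  rw [← Finset.card_sigma]
  have hm : m.factorial = (Finset.univ : Finset (Equiv.Perm (Fin m))).card := by
    simp [Finset.card_univ, Fintype.card_perm]
  rw [hm]
  have key : ∀ (τ : Equiv.Perm (Fin m)), ∀ i,
      (Finset.univ.filter fun x => (f₀ ∘ ⇑τ⁻¹) x = i).card = d i := by
    intro τ i
    rw [show (Finset.univ.filter fun x => (f₀ ∘ ⇑τ⁻¹) x = i)
        = (Finset.univ.filter fun x => f₀ (τ⁻¹ x) = i) from rfl]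
    rw [count_comp_perm f₀ τ⁻¹ i]
    exact hf₀ i
  refine Finset.card_bij' (fun p _ => p.1 * std p.2)
    (fun τ _ => ⟨τ * (std (f₀ ∘ ⇑τ⁻¹))⁻¹, f₀ ∘ ⇑τ⁻¹⟩)
    (fun a ha => Finset.mem_univ _) ?hj ?li ?ri
  case hj =>
    intro τ _
    simp only [Finset.mem_sigma, Finset.mem_univ, Finset.mem_filter, true_and]
    refine ⟨key τ, ?_⟩
    intro x
    have hstdτ : (f₀ ∘ ⇑τ⁻¹) ∘ ⇑(std (f₀ ∘ ⇑τ⁻¹)) = f₀ := hstd _ (key τ)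
    have h1 : ∀ y, f₀ (τ⁻¹ (τ (((std (f₀ ∘ ⇑τ⁻¹))⁻¹) y)))
        = f₀ (((std (f₀ ∘ ⇑τ⁻¹))⁻¹) y) := by
      intro y; rw [Equiv.Perm.inv_apply_self]
    show (f₀ ∘ ⇑τ⁻¹) ((τ * (std (f₀ ∘ ⇑τ⁻¹))⁻¹) x) = (f₀ ∘ ⇑τ⁻¹) x
    have h2 : ∀ y, f₀ ((std (f₀ ∘ ⇑τ⁻¹))⁻¹ y) = (f₀ ∘ ⇑τ⁻¹) y := by
      intro y
      have h3 := congrFun hstdτ ((std (f₀ ∘ ⇑τ⁻¹))⁻¹ y)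
      simp only [Function.comp_apply, Equiv.Perm.apply_inv_self] at h3
      exact h3.symm
    calc (f₀ ∘ ⇑τ⁻¹) ((τ * (std (f₀ ∘ ⇑τ⁻¹))⁻¹) x)
        = f₀ ((std (f₀ ∘ ⇑τ⁻¹))⁻¹ x) := by
          simp [Function.comp_apply, Equiv.Perm.mul_apply]
      _ = (f₀ ∘ ⇑τ⁻¹) x := h2 x
  case li =>
    rintro ⟨σ, f⟩ ha
    simp only [Finset.mem_sigma, Finset.mem_univ, Finset.mem_filter, true_and] at ha
    obtain ⟨hcount, hfix⟩ := ha
    have hstdf : f ∘ ⇑(std f) = f₀ := hstd f hcount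
    have hfix' : ∀ x, f (σ⁻¹ x) = f x := by
      intro x
      conv_rhs => rw [← Equiv.Perm.apply_inv_self σ x]
      rw [hfix]
    have hf : f₀ ∘ ⇑(σ * std f)⁻¹ = f := by
      funext x
      show f₀ ((std f)⁻¹ (σ⁻¹ x)) = f x
      rw [← hstdf]
      show f ((std f) ((std f)⁻¹ (σ⁻¹ x))) = f x
      rw [Equiv.Perm.apply_inv_self]
      exact hfix' x
    refine Sigma.ext ?_ ?_
    · show σ * std f * (std (f₀ ∘ ⇑(σ * std f)⁻¹))⁻¹ = σ
      rw [hf]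
      group
    · show HEq (f₀ ∘ ⇑(σ * std f)⁻¹) f
      rw [hf]
  case ri =>
    intro τ _
    show τ * (std (f₀ ∘ ⇑τ⁻¹))⁻¹ * std (f₀ ∘ ⇑τ⁻¹) = τ
    group



lemma sum_youngChar_eq (m l : ℕ) (c : Fin l → ℤ) (hsum : ∑ i, c i = (m : ℤ)) :
    ∑ σ : Equiv.Perm (Fin m), youngChar m l c σ =
      if ∀ i, 0 ≤ c i then (m.factorial : ℤ) else 0 := by
  split_ifs with h
  · have hc : ∀ i, c i = ((c i).toNat : ℤ) := fun i => (Int.toNat_of_nonneg (h i)).symm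
    set d : Fin l → ℕ := fun i => (c i).toNat with hd
    have hsum' : ∑ i, d i = m := by
      have h2 : ((∑ i, d i : ℕ) : ℤ) = (m : ℤ) := by
        push_cast
        rw [← hsum]
        exact Finset.sum_congr rfl fun i _ => (hc i).symm
      exact_mod_cast h2
    have key := sum_youngChar_nat m l d hsum'
    have hy : ∀ σ : Equiv.Perm (Fin m), youngChar m l c σ
        = (((Finset.univ.filter (fun f : Fin m → Fin l =>
            (∀ i, (Finset.univ.filter fun x => f x = i).card = d i) ∧
            ∀ x, f (σ x) = f x)).card : ℕ) : ℤ) := by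
      intro σ
      unfold youngChar
      congr 2
      apply Finset.filter_congr
      intro f _
      have hiff : (∀ i, ((Finset.univ.filter fun x => f x = i).card : ℤ) = c i)
          ↔ (∀ i, (Finset.univ.filter fun x => f x = i).card = d i) := by
        apply forall_congr'
        intro i
        rw [hc i]
        exact Nat.cast_inj
      rw [hiff]
    rw [Finset.sum_congr rfl (fun σ _ => hy σ), ← Nat.cast_sum, key]
  · push_neg at h
    obtain ⟨i, hi⟩ := h
    refine Finset.sum_eq_zero fun σ _ => ?_
    unfold youngChar
    have : (Finset.univ.filter (fun f : Fin m → Fin l =>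
        (∀ i, ((Finset.univ.filter fun x => f x = i).card : ℤ) = c i) ∧
        ∀ x, f (σ x) = f x)) = ∅ := by
      rw [Finset.filter_eq_empty_iff]
      intro f _
      rintro ⟨h1, -⟩
      have h2 : (0:ℤ) ≤ c i := (h1 i) ▸ Int.natCast_nonneg _
      exact absurd h2 (not_le.mpr hi)
    rw [this]
    simp

lemma mem_sortedParts_pos {m : ℕ} (μ : Nat.Partition m) {x : ℕ}
    (hx : x ∈ sortedParts μ) : 0 < x := by
  apply μ.parts_pos
  rw [sortedParts, List.mem_reverse] at hx
  exact (Multiset.mem_sort _).1 hx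

lemma sortedParts_sum {m : ℕ} (μ : Nat.Partition m) : (sortedParts μ).sum = m := by
  rw [sortedParts, List.sum_reverse]
  have h := congrArg Multiset.sum (Multiset.sort_eq μ.parts (· ≤ ·))
  rw [Multiset.sum_coe] at h
  rw [h, μ.parts_sum]

lemma sum_get_sortedParts {m : ℕ} (μ : Nat.Partition m) :
    ∑ i : Fin (sortedParts μ).length, ((sortedParts μ).get i : ℤ) = (m : ℤ) := by
  rw [← Nat.cast_sum]
  congr 1
  simp only [List.get_eq_getElem]
  rw [Fin.sum_univ_getElem, sortedParts_sum]

lemma sum_charOfPartition_eq_zero {m : ℕ} (μ : Nat.Partition m)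
    (hlen : 2 ≤ (sortedParts μ).length) :
    ∑ σ : Equiv.Perm (Fin m), charOfPartition μ σ = 0 := by
  unfold charOfPartition
  rw [Finset.sum_comm]
  have hcsum : ∀ w : Equiv.Perm (Fin (sortedParts μ).length),
      ∑ i : Fin (sortedParts μ).length,
        (((sortedParts μ).get i : ℤ) + ((w i).1 : ℤ) - (i.1 : ℤ)) = (m : ℤ) := by
    intro w
    rw [Finset.sum_sub_distrib, Finset.sum_add_distrib]
    rw [Equiv.sum_comp w (fun j : Fin (sortedParts μ).length => (j.1 : ℤ))]
    rw [sum_get_sortedParts]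
    ring
  have hpos : ∀ i : Fin (sortedParts μ).length, 1 ≤ ((sortedParts μ).get i : ℤ) := by
    intro i
    have hmem : (sortedParts μ).get i ∈ sortedParts μ := by
      rw [List.get_eq_getElem]; exact List.getElem_mem i.2
    exact_mod_cast mem_sortedParts_pos μ hmem
  have hterm : ∀ w : Equiv.Perm (Fin (sortedParts μ).length),
      ∑ σ : Equiv.Perm (Fin m), (Equiv.Perm.sign w : ℤ) *
        youngChar m (sortedParts μ).length
          (fun i => ((sortedParts μ).get i : ℤ) + ((w i).1 : ℤ) - (i.1 : ℤ)) σ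
      = (Equiv.Perm.sign w : ℤ) *
        (if ∀ i : Fin (sortedParts μ).length, 2 ≤ i.1 →
            (0:ℤ) ≤ ((sortedParts μ).get i : ℤ) + ((w i).1 : ℤ) - (i.1 : ℤ)
          then (m.factorial : ℤ) else 0) := by
    intro w
    rw [← Finset.mul_sum]
    congr 1
    rw [sum_youngChar_eq m _ _ (hcsum w)]
    have hiff : (∀ i, (0:ℤ) ≤ ((sortedParts μ).get i : ℤ) + ((w i).1 : ℤ) - (i.1 : ℤ))
        ↔ (∀ i : Fin (sortedParts μ).length, 2 ≤ i.1 →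
            (0:ℤ) ≤ ((sortedParts μ).get i : ℤ) + ((w i).1 : ℤ) - (i.1 : ℤ)) := by
      constructor
      · intro h i _; exact h i
      · intro h i
        rcases Nat.lt_or_ge i.1 2 with h2 | h2
        · have ha := hpos i
          have hb : (0:ℤ) ≤ ((w i).1 : ℤ) := Int.natCast_nonneg _
          have hc : (i.1 : ℤ) ≤ 1 := by exact_mod_cast Nat.lt_succ_iff.mp h2
          omega
        · exact h i h2
    rw [if_congr hiff rfl rfl]
  rw [Finset.sum_congr rfl (fun w _ => hterm w)]
  have h0 : (0:ℕ) < (sortedParts μ).length := by omega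
  have h1 : (1:ℕ) < (sortedParts μ).length := by omega
  set i0 : Fin (sortedParts μ).length := ⟨0, h0⟩ with hi0
  set i1 : Fin (sortedParts μ).length := ⟨1, h1⟩ with hi1
  have hne : i0 ≠ i1 := by
    simp [hi0, hi1, Fin.ext_iff]
  apply Finset.sum_ninvolution (fun w => w * Equiv.swap i0 i1)
  · intro w
    have hsign : ((Equiv.Perm.sign (w * Equiv.swap i0 i1) : ℤ))
        = -(Equiv.Perm.sign w : ℤ) := by
      rw [map_mul, Equiv.Perm.sign_swap hne]
      simp
    have hswapfix : ∀ i : Fin (sortedParts μ).length, 2 ≤ i.1 →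
        (w * Equiv.swap i0 i1) i = w i := by
      intro i h2
      have hne0 : i ≠ i0 := by
        intro h; rw [h] at h2; simp [hi0] at h2
      have hne1 : i ≠ i1 := by
        intro h; rw [h] at h2; simp [hi1] at h2
      show w (Equiv.swap i0 i1 i) = w i
      rw [Equiv.swap_apply_of_ne_of_ne hne0 hne1]
    have hcond : (∀ i : Fin (sortedParts μ).length, 2 ≤ i.1 →
          (0:ℤ) ≤ ((sortedParts μ).get i : ℤ) + (((w * Equiv.swap i0 i1) i).1 : ℤ) - (i.1 : ℤ))
        ↔ (∀ i : Fin (sortedParts μ).length, 2 ≤ i.1 →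
          (0:ℤ) ≤ ((sortedParts μ).get i : ℤ) + ((w i).1 : ℤ) - (i.1 : ℤ)) := by
      apply forall_congr'
      intro i
      constructor
      · intro h h2; have := h h2; rwa [hswapfix i h2] at this
      · intro h h2; have := h h2; rwa [← hswapfix i h2] at this
    rw [hsign, if_congr hcond rfl rfl]
    ring
  · intro w _ heq
    have hswap1 : Equiv.swap i0 i1 = 1 := by
      have := mul_left_cancel (a := w) (b := Equiv.swap i0 i1) (c := 1)
        (by rw [heq, mul_one])
      exact this
    have : Equiv.swap i0 i1 i0 = i0 := by rw [hswap1]; rfl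
    rw [Equiv.swap_apply_left] at this
    exact hne this.symm
  · intro w; exact Finset.mem_univ _
  · intro w; rw [mul_assoc, Equiv.swap_mul_self, mul_one]

lemma charOfPartition_single {m : ℕ} (μ : Nat.Partition m) (h : sortedParts μ = [m])
    (π : Equiv.Perm (Fin m)) : charOfPartition μ π = 1 := by
  unfold charOfPartition
  have hlen : (sortedParts μ).length = 1 := by rw [h]; rfl
  haveI hsub : Subsingleton (Fin (sortedParts μ).length) := by
    rw [hlen]; infer_instance
  haveI : Subsingleton (Equiv.Perm (Fin (sortedParts μ).length)) :=
    ⟨fun a b => Equiv.ext fun x => Subsingleton.elim _ _⟩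
  rw [Fintype.sum_subsingleton _ 1]
  have hget : ∀ i : Fin (sortedParts μ).length, (sortedParts μ).get i = m := by
    intro i
    have hmem : (sortedParts μ).get i ∈ sortedParts μ := by
      rw [List.get_eq_getElem]; exact List.getElem_mem i.2
    have hmem2 : (sortedParts μ).get i ∈ [m] := by rw [← h]; exact hmem
    simpa using hmem2
  have hyoung : youngChar m (sortedParts μ).length
      (fun i => ((sortedParts μ).get i : ℤ) + (((1 : Equiv.Perm (Fin (sortedParts μ).length)) i).1 : ℤ) - (i.1 : ℤ)) π = 1 := by
    unfold youngChar
    have hfilter : (Finset.univ.filter (fun f : Fin m → Fin (sortedParts μ).length =>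
        (∀ i, ((Finset.univ.filter fun x => f x = i).card : ℤ)
          = ((sortedParts μ).get i : ℤ) + (((1 : Equiv.Perm (Fin (sortedParts μ).length)) i).1 : ℤ) - (i.1 : ℤ)) ∧
        ∀ x, f (π x) = f x)) = Finset.univ := by
      rw [Finset.filter_true_of_mem]
      intro f _
      constructor
      · intro i
        have hall : ∀ x, f x = i := fun x => Subsingleton.elim _ _
        rw [Finset.filter_true_of_mem (fun x _ => hall x)]
        rw [Finset.card_univ, Fintype.card_fin, hget i]
        simp
      · intro x
        exact Subsingleton.elim _ _
    rw [hfilter, Finset.card_univ]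
    have : Fintype.card (Fin m → Fin (sortedParts μ).length) = 1 := by
      rw [Fintype.card_fun, hlen]
      simp
    rw [this]
    simp
  rw [hyoung, map_one]
  simp

lemma sortedParts_length {m : ℕ} (μ : Nat.Partition m) :
    (sortedParts μ).length = Multiset.card μ.parts := by
  simp [sortedParts]

lemma doublePartition_parts_card {n : ℕ} (μ : Nat.Partition n) :
    Multiset.card (doublePartition μ).parts = Multiset.card μ.parts := by
  show Multiset.card (μ.parts.map _) = _
  rw [Multiset.card_map]

lemma parts_card_pos {n : ℕ} (hn : n ≠ 0) (μ : Nat.Partition n) :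
    0 < Multiset.card μ.parts := by
  rcases eq_or_ne μ.parts 0 with h | h
  · exfalso; apply hn; rw [← μ.parts_sum, h]; rfl
  · exact Multiset.card_pos.mpr h

lemma eq_indiscrete_of_card_one {n : ℕ} (μ : Nat.Partition n)
    (h : Multiset.card μ.parts = 1) : μ = Nat.Partition.indiscrete n := by
  obtain ⟨a, ha⟩ := Multiset.card_eq_one.mp h
  have hsum : a = n := by
    have := μ.parts_sum
    rw [ha] at this
    simpa using this
  have hn0 : n ≠ 0 := by
    intro h0
    have := μ.parts_pos (ha ▸ Multiset.mem_singleton_self a)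
    omega
  apply Nat.Partition.ext
  rw [ha, hsum, Nat.Partition.indiscrete_parts hn0]

lemma sortedParts_double_indiscrete (n : ℕ) (hn : n ≠ 0) :
    sortedParts (doublePartition (Nat.Partition.indiscrete n)) = [2*n] := by
  have hparts : (doublePartition (Nat.Partition.indiscrete n)).parts = {2*n} := by
    show (Nat.Partition.indiscrete n).parts.map _ = _
    rw [Nat.Partition.indiscrete_parts hn, Multiset.map_singleton]
  rw [sortedParts, hparts, Multiset.sort_singleton]
  rfl

lemma Cprime_indiscrete (n : ℕ) (hn : n ≠ 0) (z : ℂ) :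
    Cprime (Nat.Partition.indiscrete n) z = ∏ k ∈ Finset.range n, (z + 2*k) := by
  unfold Cprime
  have h : sortedParts (Nat.Partition.indiscrete n) = [n] := by
    rw [sortedParts, Nat.Partition.indiscrete_parts hn, Multiset.sort_singleton]
    rfl
  rw [h]
  show ∏ i ∈ Finset.range 1, _ = _
  rw [Finset.prod_range_one]
  show ∏ j ∈ Finset.range ([n].getD 0 0), (z + 2*(j:ℂ) - ((0:ℕ):ℂ)) = _
  simp

/-! ### The cardinality of the hyperoctahedral group -/

namespace HypAux

variable (n : ℕ)

/-- The pairing equivalence `Fin n × Bool ≃ Fin (2n)`. -/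
def E : Fin n × Bool ≃ Fin (2*n) where
  toFun p := ⟨2*p.1.1 + (if p.2 then 1 else 0), by
    rcases p with ⟨⟨k, hk⟩, b⟩; cases b <;> simp <;> omega⟩
  invFun x := (⟨x.1/2, by have := x.2; omega⟩, decide (x.1 % 2 = 1))
  left_inv := by
    rintro ⟨⟨k, hk⟩, b⟩
    cases b <;> simp [Prod.ext_iff, Fin.ext_iff] <;> omega
  right_inv := by
    rintro ⟨x, hx⟩
    by_cases h : x % 2 = 1 <;> simp [h, Fin.ext_iff] <;> omega

lemma E_false (k : Fin n) : E n (k, false) = lo n k := by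
  simp [E, lo, Fin.ext_iff]

lemma E_true (k : Fin n) : E n (k, true) = hi n k := by
  simp [E, hi, Fin.ext_iff]

/-- A signed permutation of `Fin n × Bool`. -/
def gPerm (π : Equiv.Perm (Fin n)) (s : Fin n → Bool) : Equiv.Perm (Fin n × Bool) where
  toFun p := (π p.1, xor p.2 (s p.1))
  invFun p := (π⁻¹ p.1, xor p.2 (s (π⁻¹ p.1)))
  left_inv := by
    rintro ⟨k, b⟩
    simp [Bool.xor_assoc]
  right_inv := by
    rintro ⟨k, b⟩
    simp [Bool.xor_assoc]

/-- The embedding of signed permutations into `S_{2n}`. -/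
def θ (π : Equiv.Perm (Fin n)) (s : Fin n → Bool) : Equiv.Perm (Fin (2*n)) :=
  (E n).permCongr (gPerm n π s)

lemma θ_apply (π : Equiv.Perm (Fin n)) (s : Fin n → Bool) (k : Fin n) (b : Bool) :
    θ n π s (E n (k, b)) = E n (π k, xor b (s k)) := by
  simp [θ, Equiv.permCongr_apply, gPerm]

lemma perm_ext (f g : Equiv.Perm (Fin (2*n)))
    (h : ∀ (k : Fin n) (b : Bool), f (E n (k, b)) = g (E n (k, b))) : f = g := by
  apply Equiv.ext
  intro x
  obtain ⟨⟨k, b⟩, rfl⟩ := (E n).surjective x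
  exact h k b

lemma θ_one : θ n 1 (fun _ => false) = 1 := by
  apply perm_ext
  intro k b
  rw [θ_apply]
  simp

lemma θ_mul (π ρ : Equiv.Perm (Fin n)) (s t : Fin n → Bool) :
    θ n π s * θ n ρ t = θ n (π * ρ) (fun k => xor (t k) (s (ρ k))) := by
  apply perm_ext
  intro k b
  rw [Equiv.Perm.mul_apply, θ_apply, θ_apply, θ_apply]
  simp [Bool.xor_assoc]

lemma θ_inv (π : Equiv.Perm (Fin n)) (s : Fin n → Bool) :
    (θ n π s)⁻¹ = θ n π⁻¹ (fun k => s (π⁻¹ k)) := by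
  apply inv_eq_of_mul_eq_one_right
  rw [θ_mul]
  have h1 : (fun k : Fin n => xor (s (π⁻¹ k)) (s (π⁻¹ k))) = (fun _ : Fin n => false) := by
    funext k; simp
  rw [mul_inv_cancel, h1, θ_one]

lemma permCongr_mul (p q : Equiv.Perm (Fin n × Bool)) :
    (E n).permCongr (p * q) = (E n).permCongr p * (E n).permCongr q :=
  Equiv.ext fun x => by simp [Equiv.permCongr_apply]

lemma permCongr_swap (a b : Fin n × Bool) :
    (E n).permCongr (Equiv.swap a b) = Equiv.swap (E n a) (E n b) :=
  Equiv.symm_trans_swap_trans a b (E n)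

lemma gPerm_single (a : Fin n) :
    gPerm n 1 (fun k => decide (k = a)) = Equiv.swap (a, false) (a, true) := by
  apply Equiv.ext
  rintro ⟨k, b⟩
  by_cases hk : k = a
  · subst hk
    cases b <;> simp [gPerm, Equiv.swap_apply_def]
  · simp [gPerm, hk, Equiv.swap_apply_def, Prod.ext_iff]

lemma θ_single (a : Fin n) :
    θ n 1 (fun k => decide (k = a)) = Equiv.swap (lo n a) (hi n a) := by
  rw [θ, gPerm_single, permCongr_swap, E_false, E_true]

lemma gPerm_swap (i j : Fin n) (hij : i ≠ j) :
    gPerm n (Equiv.swap i j) (fun _ => false)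
      = Equiv.swap ((i, false) : Fin n × Bool) (j, false)
        * Equiv.swap ((i, true) : Fin n × Bool) (j, true) := by
  apply Equiv.ext
  rintro ⟨k, b⟩
  rw [Equiv.Perm.mul_apply]
  by_cases hki : k = i
  · subst hki
    cases b <;> simp [gPerm, Equiv.swap_apply_def, hij, Prod.ext_iff]
  · by_cases hkj : k = j
    · subst hkj
      cases b <;> simp [gPerm, Equiv.swap_apply_def, hij.symm, Ne.symm hij, Prod.ext_iff]
    · cases b <;>
        simp [gPerm, Equiv.swap_apply_def, hki, hkj, Prod.ext_iff,
          Equiv.swap_apply_of_ne_of_ne, hij]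

lemma θ_swap (i j : Fin n) (hij : i ≠ j) :
    θ n (Equiv.swap i j) (fun _ => false)
      = Equiv.swap (lo n i) (lo n j) * Equiv.swap (hi n i) (hi n j) := by
  rw [θ, gPerm_swap n i j hij, permCongr_mul, permCongr_swap, permCongr_swap,
    E_false, E_false, E_true, E_true]

lemma θ_decomp (π : Equiv.Perm (Fin n)) (s : Fin n → Bool) :
    θ n π s = θ n π (fun _ => false) * θ n 1 s := by
  rw [θ_mul, mul_one]
  congr 1
  funext k
  simp

lemma θ_flip_mem (s : Fin n → Bool) : θ n 1 s ∈ hyperoctahedral n := by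
  suffices aux : ∀ (F : Finset (Fin n)) (s : Fin n → Bool),
      Finset.univ.filter (fun k => s k = true) = F → θ n 1 s ∈ hyperoctahedral n from
    aux _ s rfl
  intro F
  induction F using Finset.induction_on with
  | empty =>
    intro s hs
    have hsf : s = fun _ => false := by
      funext k
      cases h : s k
      · rfl
      · exfalso
        have : k ∈ Finset.univ.filter (fun k => s k = true) := by simp [h]
        rw [hs] at this
        simp at this
    rw [hsf, θ_one]
    exact one_mem _
  | @insert a F' ha ih =>
    intro s hs
    have hsa : s a = true := by
      have h1 : a ∈ Finset.univ.filter (fun k => s k = true) := by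
        rw [hs]; exact Finset.mem_insert_self a F'
      simpa using h1
    set s' := Function.update s a false with hs'
    have hmem : ∀ k, (s k = true) ↔ k ∈ insert a F' := by
      intro k
      rw [← hs]
      simp
    have hdecomp : θ n 1 s = Equiv.swap (lo n a) (hi n a) * θ n 1 s' := by
      rw [← θ_single, θ_mul, one_mul]
      congr 1
      funext k
      by_cases hk : k = a
      · subst hk
        simp [hs', hsa]
      · simp [hs', Function.update_of_ne hk, hk]
    rw [hdecomp]
    refine mul_mem (Subgroup.subset_closure (Or.inl ⟨a, rfl⟩)) (ih s' ?_)
    ext k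
    simp only [Finset.mem_filter, Finset.mem_univ, true_and]
    by_cases hk : k = a
    · subst hk
      simp [hs', ha]
    · rw [hs', Function.update_of_ne hk, hmem k]
      simp [Finset.mem_insert, hk]

lemma θ_perm_mem (π : Equiv.Perm (Fin n)) :
    θ n π (fun _ => false) ∈ hyperoctahedral n := by
  have hπ : π ∈ Subgroup.closure {σ : Equiv.Perm (Fin n) | σ.IsSwap} := by
    rw [Equiv.Perm.closure_isSwap]; trivial
  refine Subgroup.closure_induction
    (p := fun ρ _ => θ n ρ (fun _ => false) ∈ hyperoctahedral n) ?_ ?_ ?_ ?_ hπ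
  · rintro σ ⟨i, j, hij, rfl⟩
    rw [θ_swap n i j hij]
    apply Subgroup.subset_closure
    rcases lt_or_gt_of_ne hij with h | h
    · exact Or.inr ⟨i, j, h, rfl⟩
    · refine Or.inr ⟨j, i, h, ?_⟩
      rw [Equiv.swap_comm (lo n i), Equiv.swap_comm (hi n i)]
  · show θ n 1 (fun _ => false) ∈ hyperoctahedral n
    rw [θ_one]; exact one_mem _
  · intro x y _ _ hx hy
    have h1 : θ n (x * y) (fun _ => false)
        = θ n x (fun _ => false) * θ n y (fun _ => false) := by
      rw [θ_mul]; rfl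
    rw [h1]
    exact mul_mem hx hy
  · intro x _ hx
    have h2 : (θ n x (fun _ => false))⁻¹ = θ n x⁻¹ (fun _ => false) := θ_inv n x _
    rw [← h2]
    exact inv_mem hx

/-- The range of `θ` as a subgroup. -/
def rangeθ : Subgroup (Equiv.Perm (Fin (2*n))) where
  carrier := {g | ∃ π s, g = θ n π s}
  one_mem' := ⟨1, fun _ => false, (θ_one n).symm⟩
  mul_mem' := by
    rintro a b ⟨π, s, rfl⟩ ⟨ρ, t, rfl⟩
    exact ⟨π * ρ, _, θ_mul n π ρ s t⟩
  inv_mem' := by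
    rintro a ⟨π, s, rfl⟩
    exact ⟨π⁻¹, _, θ_inv n π s⟩

lemma hyper_eq_range : hyperoctahedral n = rangeθ n := by
  apply le_antisymm
  · rw [hyperoctahedral, Subgroup.closure_le]
    rintro g (⟨k, rfl⟩ | ⟨i, j, hij, rfl⟩)
    · exact ⟨1, fun m => decide (m = k), (θ_single n k).symm⟩
    · exact ⟨Equiv.swap i j, fun _ => false, (θ_swap n i j (ne_of_lt hij)).symm⟩
  · rintro g ⟨π, s, rfl⟩
    rw [θ_decomp]
    exact mul_mem (θ_perm_mem n π) (θ_flip_mem n s)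

lemma θ_injective :
    Function.Injective (fun p : Equiv.Perm (Fin n) × (Fin n → Bool) => θ n p.1 p.2) := by
  rintro ⟨π, s⟩ ⟨ρ, t⟩ h
  simp only at h
  have hval : ∀ k : Fin n, (π k, s k) = (ρ k, t k) := by
    intro k
    have h1 := congrArg (fun f : Equiv.Perm (Fin (2*n)) => f (E n (k, false))) h
    simp only [θ_apply] at h1
    have h2 := (E n).injective h1
    simpa using h2
  have hπ : π = ρ := Equiv.ext fun k => (Prod.ext_iff.1 (hval k)).1
  have hst : s = t := funext fun k => by
    have := (Prod.ext_iff.1 (hval k)).2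
    simpa using this
  rw [hπ, hst]

lemma card_hyperoctahedral :
    (Finset.univ.filter (· ∈ hyperoctahedral n)).card = 2^n * n.factorial := by
  have h1 : (Finset.univ.filter (· ∈ hyperoctahedral n)).card
      = Nat.card {g // g ∈ hyperoctahedral n} := by
    rw [Nat.card_eq_fintype_card, Fintype.card_subtype]
  rw [h1]
  have h2 : Nat.card {g // g ∈ hyperoctahedral n}
      = Nat.card (Equiv.Perm (Fin n) × (Fin n → Bool)) := by
    apply Nat.card_congr
    refine (Equiv.subtypeEquivRight ?_).trans
      (Equiv.ofInjective _ (θ_injective n)).symm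
    intro g
    rw [hyper_eq_range]
    constructor
    · rintro ⟨π, s, rfl⟩; exact ⟨(π, s), rfl⟩
    · rintro ⟨⟨π, s⟩, rfl⟩; exact ⟨π, s, rfl⟩
  rw [h2, Nat.card_eq_fintype_card, Fintype.card_prod, Fintype.card_perm,
    Fintype.card_fin, Fintype.card_fun, Fintype.card_bool, Fintype.card_fin]
  ring

end HypAux

/-- `∑_{σ ∈ S_{2n}} Wg^O_n(σ; z) = 2^n n! / (z (z+2) ⋯ (z+2(n-1)))` for `z` avoiding
the poles `0, -2, …, -2(n-1)`. -/
theorem stmt9 (n : ℕ) (hn : 1 ≤ n) (z : ℂ) (hz : ∀ k : ℕ, k < n → z ≠ -(2*k)) :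
    ∑ σ : Equiv.Perm (Fin (2*n)), WgO n z σ =
      (2^n * n.factorial : ℂ) / ∏ k ∈ Finset.range n, (z + 2*k) := by
  classical
  have hn0 : n ≠ 0 := by omega
  have hfact : (((2*n).factorial : ℂ)) ≠ 0 := Nat.cast_ne_zero.mpr (Nat.factorial_ne_zero _)
  have hP : (∏ k ∈ Finset.range n, (z + 2*(k:ℂ))) ≠ 0 := by
    rw [Finset.prod_ne_zero_iff]
    intro k hk h0
    apply hz k (Finset.mem_range.mp hk)
    linear_combination h0
  have heH : ∑ τ : Equiv.Perm (Fin (2*n)), eH n τ = 1 := by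
    unfold eH
    rw [Finset.sum_ite, Finset.sum_const, Finset.sum_const_zero, add_zero]
    rw [HypAux.card_hyperoctahedral n, nsmul_eq_mul]
    push_cast
    exact mul_inv_cancel₀ (mul_ne_zero (pow_ne_zero _ two_ne_zero)
      (Nat.cast_ne_zero.mpr (Nat.factorial_ne_zero _)))
  have hχ_sum : ∀ lam : Nat.Partition n,
      ∑ σ : Equiv.Perm (Fin (2*n)), omegaSph lam σ
        = (((∑ ρ : Equiv.Perm (Fin (2*n)), charOfPartition (doublePartition lam) ρ : ℤ)) : ℂ)
            * ∑ τ : Equiv.Perm (Fin (2*n)), eH n τ := by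
    intro lam
    unfold omegaSph conv
    rw [Finset.sum_comm]
    push_cast
    rw [Finset.mul_sum]
    apply Finset.sum_congr rfl
    intro τ _
    have hre : ∑ σ : Equiv.Perm (Fin (2*n)), (charOfPartition (doublePartition lam) (σ * τ⁻¹) : ℂ)
        = ∑ ρ : Equiv.Perm (Fin (2*n)), (charOfPartition (doublePartition lam) ρ : ℂ) := by
      have := Equiv.sum_comp (Equiv.mulRight τ⁻¹)
        (fun ρ => (charOfPartition (doublePartition lam) ρ : ℂ))
      simpa using this
    rw [← Finset.sum_mul, hre]
  set lam0 := Nat.Partition.indiscrete n with hlam0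
  have hχ0 : ∀ ρ : Equiv.Perm (Fin (2*n)), charOfPartition (doublePartition lam0) ρ = 1 :=
    fun ρ => charOfPartition_single _ (sortedParts_double_indiscrete n hn0) ρ
  have hχ0sum : (∑ ρ : Equiv.Perm (Fin (2*n)), charOfPartition (doublePartition lam0) ρ)
      = ((2*n).factorial : ℤ) := by
    rw [Finset.sum_congr rfl (fun ρ _ => hχ0 ρ), Finset.sum_const, Finset.card_univ,
      Fintype.card_perm, Fintype.card_fin]
    simp
  have hvanish : ∀ lam : Nat.Partition n, lam ≠ lam0 →
      (∑ ρ : Equiv.Perm (Fin (2*n)), charOfPartition (doublePartition lam) ρ) = 0 := by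
    intro lam hne
    apply sum_charOfPartition_eq_zero
    rw [sortedParts_length, doublePartition_parts_card]
    have h1 : Multiset.card lam.parts ≠ 1 := fun h => hne (eq_indiscrete_of_card_one lam h)
    have h2 : 0 < Multiset.card lam.parts := parts_card_pos hn0 lam
    omega
  unfold WgO
  rw [← Finset.mul_sum, Finset.sum_comm]
  have hterm : ∀ lam : Nat.Partition n,
      ∑ σ : Equiv.Perm (Fin (2*n)),
        (charOfPartition (doublePartition lam) 1 : ℂ) / Cprime lam z * omegaSph lam σ
      = (charOfPartition (doublePartition lam) 1 : ℂ) / Cprime lam z *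
          ((((∑ ρ : Equiv.Perm (Fin (2*n)), charOfPartition (doublePartition lam) ρ : ℤ)) : ℂ)
            * ∑ τ : Equiv.Perm (Fin (2*n)), eH n τ) := by
    intro lam
    rw [← Finset.mul_sum, hχ_sum lam]
  rw [Finset.sum_congr rfl (fun lam _ => hterm lam)]
  rw [Finset.sum_eq_single lam0]
  · rw [hχ0sum, hχ0 1, heH, Cprime_indiscrete n hn0 z]
    push_cast
    field_simp
  · intro lam _ hne
    rw [hvanish lam hne]
    simp
  · intro h
    exact absurd (Finset.mem_univ lam0) h
end
end

section
/- Let $n \ge 1$ and let $N$ be an indeterminate (or a real number avoiding poles). For $0 \le r \le \lfloor n/2 \rfloor$, define $A_r = \frac{2n-4r+1}{(2r)!!\,(2n-2r+1)!!} \prod_{j=1}^{n-r}\frac{1}{N+2j-1} \prod_{j=0}^{r-1}\frac{1}{N+2j}$. Then for each $0 \le k \le \lfloor n/2 \rfloor$, $A_0 + A_1 + \cdots + A_k = \frac{1}{(2k)!!\,(2(n-k)-1)!!} \cdot \frac{1}{N+2n-1} \prod_{j=1}^{n-k-1}\frac{1}{N+2j-1} \prod_{j=0}^{k-1}\frac{1}{N+2j}$.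 -/
noncomputable section

open Finset

/-- `A_r = ((2n-4r+1)/((2r)‼ (2n-2r+1)‼)) ∏_{j=1}^{n-r} 1/(N+2j-1) ∏_{j=0}^{r-1} 1/(N+2j)`. -/
def Aterm (n : ℕ) (N : ℝ) (r : ℕ) : ℝ :=
  ((2*n - 4*r + 1 : ℕ) : ℝ) /
      ((Nat.doubleFactorial (2*r) : ℝ) * (Nat.doubleFactorial (2*n - 2*r + 1) : ℝ)) *
    (∏ j ∈ range (n - r), (N + (2*j+1 : ℕ))⁻¹) *
    (∏ j ∈ range r, (N + (2*j : ℕ))⁻¹)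

lemma dfact_ne (m : ℕ) : (Nat.doubleFactorial m : ℝ) ≠ 0 := by
  exact_mod_cast (Nat.doubleFactorial_pos m).ne'

/-- For `0 ≤ k ≤ ⌊n/2⌋`,
`A_0 + ⋯ + A_k = (1/((2k)‼ (2(n-k)-1)‼)) (1/(N+2n-1)) ∏_{j=1}^{n-k-1} 1/(N+2j-1)
∏_{j=0}^{k-1} 1/(N+2j)`, for real `N` avoiding the poles. -/
theorem stmt11 (n : ℕ) (hn : 1 ≤ n) (N : ℝ)
    (hN : ∀ t : ℕ, t ≤ 2*n - 1 → N + (t : ℝ) ≠ 0)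
    (k : ℕ) (hk : k ≤ n / 2) :
    ∑ r ∈ range (k+1), Aterm n N r =
      ((Nat.doubleFactorial (2*k) : ℝ) * (Nat.doubleFactorial (2*(n-k) - 1) : ℝ))⁻¹ *
        (N + (2*n - 1 : ℕ))⁻¹ *
        (∏ j ∈ range (n - k - 1), (N + (2*j+1 : ℕ))⁻¹) *
        (∏ j ∈ range k, (N + (2*j : ℕ))⁻¹) := by
  induction k with
  | zero =>
    obtain ⟨m, rfl⟩ : ∃ m, n = m + 1 := ⟨n - 1, by omega⟩
    rw [Finset.sum_range_one]
    unfold Aterm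
    have h1 : 2*(m+1) - 4*0 + 1 = 2*m+3 := by omega
    have h3 : 2*(m+1) - 2*0 + 1 = 2*m+3 := by omega
    have h4 : (m+1) - 0 = m+1 := by omega
    have h5 : 2*((m+1)-0) - 1 = 2*m+1 := by omega
    have h6 : (m+1) - 1 = m := by omega
    have h7 : 2*(m+1) - 1 = 2*m+1 := by omega
    rw [h1, h4, h7, h6, Finset.prod_range_zero, Finset.prod_range_succ]
    have hdf : Nat.doubleFactorial (2*m+3) = (2*m+3) * Nat.doubleFactorial (2*m+1) := by
      rw [show 2*m+3 = (2*m+1)+2 by ring, Nat.doubleFactorial_add_two]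
    have hz : N + ((2*m+1 : ℕ) : ℝ) ≠ 0 := hN _ (by omega)
    have h20 : Nat.doubleFactorial (2*0) = 1 := rfl
    rw [hdf, h20]
    set P : ℝ := ∏ j ∈ range m, (N + ((2*j+1 : ℕ) : ℝ))⁻¹ with hP
    have hB : ((Nat.doubleFactorial (2*m+1) : ℕ) : ℝ) ≠ 0 := dfact_ne _
    set B : ℝ := ((Nat.doubleFactorial (2*m+1) : ℕ) : ℝ) with hBdef
    have h23 : ((2:ℝ)*m+3) ≠ 0 := by positivity
    push_cast at hz ⊢
    field_simp
    ring
  | succ k ih =>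
    have h2k : 2*(k+1) ≤ n := by omega
    obtain ⟨d, rfl⟩ : ∃ d, n = 2*k+2+d := ⟨n - (2*k+2), by omega⟩
    rw [Finset.sum_range_succ, ih (by omega)]
    unfold Aterm
    -- rewrite all nat-subtraction arguments
    have e1 : 2*(2*k+2+d) - 4*(k+1) + 1 = 2*d+1 := by omega
    have e2 : 2*(2*k+2+d) - 2*(k+1) + 1 = 2*k+2*d+3 := by omega
    have e3 : (2*k+2+d) - (k+1) = k+1+d := by omega
    have e4 : (2*k+2+d) - k - 1 = k+1+d := by omega
    have e5 : 2*((2*k+2+d) - k) - 1 = 2*k+2*d+3 := by omega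
    have e6 : 2*(2*k+2+d) - 1 = 4*k+2*d+3 := by omega
    have e7 : 2*(k+1+d) - 1 = 2*k+2*d+1 := by omega
    have e8 : k+1+d - 1 = k+d := by omega
    rw [e1, e2, e3, e4, e5, e6, e7, e8]
    have he9 : k+1+d = (k+d) + 1 := by omega
    rw [he9, Finset.prod_range_succ, Finset.prod_range_succ (n := k)]
    -- doubleFactorial recurrences
    have hdfA : Nat.doubleFactorial (2*(k+1)) = (2*k+2) * Nat.doubleFactorial (2*k) := by
      rw [show 2*(k+1) = 2*k+2 by ring, Nat.doubleFactorial_add_two]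
    have hdfB : Nat.doubleFactorial (2*k+2*d+3) = (2*k+2*d+3) * Nat.doubleFactorial (2*k+2*d+1) := by
      rw [show 2*k+2*d+3 = (2*k+2*d+1)+2 by ring, Nat.doubleFactorial_add_two]
    rw [hdfA, hdfB]
    have hx : N + ((2*(k+d)+1 : ℕ) : ℝ) ≠ 0 := hN _ (by omega)
    have hy : N + ((2*k : ℕ) : ℝ) ≠ 0 := hN _ (by omega)
    have hz : N + ((4*k+2*d+3 : ℕ) : ℝ) ≠ 0 := hN _ (by omega)
    have hA := dfact_ne (2*k)
    have hB := dfact_ne (2*k+2*d+1)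
    have hc1 : ((2:ℝ)*k+2) ≠ 0 := by positivity
    have hc2 : ((2:ℝ)*k+2*d+3) ≠ 0 := by positivity
    set P : ℝ := ∏ j ∈ range (k+d), (N + ((2*j+1 : ℕ) : ℝ))⁻¹ with hP
    set Q : ℝ := ∏ j ∈ range k, (N + ((2*j : ℕ) : ℝ))⁻¹ with hQ
    set A : ℝ := ((Nat.doubleFactorial (2*k) : ℕ) : ℝ) with hAdef
    set B : ℝ := ((Nat.doubleFactorial (2*k+2*d+1) : ℕ) : ℝ) with hBdef
    push_cast at hx hy hz ⊢
    set_option maxHeartbeats 2000000 in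
    (have hz' : N + ((k:ℝ) * 4 + 2 * d + 3) ≠ 0 := by convert hz using 2; ring
     field_simp; simp only [hAdef, hBdef]; field_simp; ring)
end
end
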